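/- arXiv:1707.04203 — 3 statements merged into one kernel-verified Lean document; each statement's English description precedes it below -/
import Mathlib

section
/- The Gaussian pdf satisfies the identity ∂_E [ exp(−(x − z√(1−E))²/(2E)) / √(2πE) ] = (e^{z²/2} / (2(1−E))) · ∂_z { e^{−z²/2} ∂_z [ exp(−(x − z√(1−E))²/(2E)) / √(2πE) ] } for all x, z ∈ ℝ and 0 < E < 1. -/
/-- The Gaussian pdf `𝒩(x | z√(1−E), E)` satisfies, for `0 < E < 1`,
`∂_E 𝒩(x|z√(1−E),E) = (e^{z²/2}/(2(1−E))) ∂_z { e^{−z²/2} ∂_z 𝒩(x|z√(1−E),E) }`. -/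
theorem stmt_2 (x z E : ℝ) (hE : E ∈ Set.Ioo (0:ℝ) 1) :
    deriv (fun E' : ℝ =>
        Real.exp (-(x - z * Real.sqrt (1 - E'))^2 / (2 * E')) / Real.sqrt (2 * Real.pi * E')) E
      = Real.exp (z^2 / 2) / (2 * (1 - E)) *
        deriv (fun z' : ℝ => Real.exp (-z'^2 / 2) *
          deriv (fun z'' : ℝ =>
            Real.exp (-(x - z'' * Real.sqrt (1 - E))^2 / (2 * E)) /
              Real.sqrt (2 * Real.pi * E)) z') z := by
  obtain ⟨hE0, hE1⟩ := hE
  have h1E : (0:ℝ) < 1 - E := by linarith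
  have hπ := Real.pi_pos
  set s := Real.sqrt (1 - E) with hs
  have hs0 : 0 < s := Real.sqrt_pos.mpr h1E
  have hs2 : s^2 = 1 - E := Real.sq_sqrt h1E.le
  have hcpos : 0 < 2 * Real.pi * E := by positivity
  set c := Real.sqrt (2 * Real.pi * E) with hc
  have hc0 : 0 < c := Real.sqrt_pos.mpr hcpos
  have hc2 : c^2 = 2 * Real.pi * E := Real.sq_sqrt hcpos.le
  -- inner derivative in z
  have hg : ∀ u : ℝ, HasDerivAt (fun z'' : ℝ =>
      Real.exp (-(x - z''*s)^2/(2*E)) / c)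
      (Real.exp (-(x - u*s)^2/(2*E)) * ((x - u*s)*s/E) / c) u := by
    intro u
    have hlin : HasDerivAt (fun z'' : ℝ => x - z''*s) (-s) u := by
      simpa using ((hasDerivAt_id u).mul_const s).const_sub x
    have h1 : HasDerivAt (fun z'' : ℝ => -(x - z''*s)^2/(2*E))
        ((x - u*s)*s/E) u := by
      have h2 := ((hlin.pow 2).neg).div_const (2*E)
      refine h2.congr_deriv ?_
      field_simp
      ring
    exact (h1.exp).div_const c
  have hgd : (deriv (fun z'' : ℝ =>
      Real.exp (-(x - z''*s)^2/(2*E)) / c))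
      = fun u => Real.exp (-(x - u*s)^2/(2*E)) * ((x - u*s)*s/E) / c := by
    funext u; exact (hg u).deriv
  -- outer derivative in z
  have hh : HasDerivAt (fun z' : ℝ => Real.exp (-z'^2/2) *
      (Real.exp (-(x - z'*s)^2/(2*E)) * ((x - z'*s)*s/E) / c))
      (Real.exp (-z^2/2) * (-z) * (Real.exp (-(x - z*s)^2/(2*E)) * ((x - z*s)*s/E) / c)
       + Real.exp (-z^2/2) *
         (Real.exp (-(x - z*s)^2/(2*E)) * (((x - z*s)*s/E)^2 - s*s/E) / c)) z := by
    have hA : HasDerivAt (fun z' : ℝ => Real.exp (-z'^2/2)) (Real.exp (-z^2/2) * (-z)) z := by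
      have h0 : HasDerivAt (fun z' : ℝ => -z'^2/2) (-z) z := by
        have := ((hasDerivAt_pow 2 z).neg).div_const 2
        refine this.congr_deriv ?_
        push_cast
        ring
      exact h0.exp
    have hlin : HasDerivAt (fun z' : ℝ => x - z'*s) (-s) z := by
      simpa using ((hasDerivAt_id z).mul_const s).const_sub x
    have hp : HasDerivAt (fun z' : ℝ => -(x - z'*s)^2/(2*E)) ((x - z*s)*s/E) z := by
      have h2 := ((hlin.pow 2).neg).div_const (2*E)
      refine h2.congr_deriv ?_
      field_simp
      ring
    have hL : HasDerivAt (fun z' : ℝ => (x - z'*s)*s/E) (-s*s/E) z := by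
      simpa using (hlin.mul_const s).div_const E
    have hB : HasDerivAt (fun z' : ℝ =>
        Real.exp (-(x - z'*s)^2/(2*E)) * ((x - z'*s)*s/E) / c)
        (Real.exp (-(x - z*s)^2/(2*E)) * (((x - z*s)*s/E)^2 - s*s/E) / c) z := by
      have h3 := ((hp.exp).mul hL).div_const c
      refine h3.congr_deriv ?_
      ring
    exact hA.mul hB
  -- derivative in E
  have hsq : HasDerivAt (fun E' : ℝ => Real.sqrt (1 - E')) (-(1/(2*s))) E := by
    have h0 : HasDerivAt (fun E' : ℝ => 1 - E') (-1) E := by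
      simpa using (hasDerivAt_id E).const_sub 1
    have h1 := (Real.hasDerivAt_sqrt h1E.ne').comp E h0
    refine h1.congr_deriv ?_
    simp [← hs]
  have ha : HasDerivAt (fun E' : ℝ => x - z * Real.sqrt (1 - E')) (z/(2*s)) E := by
    have := (hsq.const_mul z).const_sub x
    refine this.congr_deriv ?_
    ring
  have hn : HasDerivAt (fun E' : ℝ => -(x - z * Real.sqrt (1 - E'))^2)
      (-(2*(x - z*s)*(z/(2*s)))) E := by
    have := (ha.pow 2).neg
    refine this.congr_deriv ?_
    push_cast
    ring
  have hd : HasDerivAt (fun E' : ℝ => 2*E') 2 E := by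
    simpa using (hasDerivAt_id E).const_mul 2
  have hq : HasDerivAt (fun E' : ℝ => -(x - z * Real.sqrt (1 - E'))^2/(2*E'))
      ((-(2*(x - z*s)*(z/(2*s))) * (2*E) - (-(x - z*s)^2) * 2) / (2*E)^2) E :=
    hn.div hd (by positivity)
  have hr : HasDerivAt (fun E' : ℝ => Real.sqrt (2 * Real.pi * E')) (Real.pi / c) E := by
    have h0 : HasDerivAt (fun E' : ℝ => 2 * Real.pi * E') (2 * Real.pi) E := by
      simpa using (hasDerivAt_id E).const_mul (2 * Real.pi)
    have h1 := (Real.hasDerivAt_sqrt hcpos.ne').comp E h0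
    refine h1.congr_deriv ?_
    rw [← hc]
    field_simp
  have hF : HasDerivAt (fun E' : ℝ =>
        Real.exp (-(x - z * Real.sqrt (1 - E'))^2 / (2 * E')) / Real.sqrt (2 * Real.pi * E')) _ E :=
    (hq.exp).div hr hc0.ne'
  rw [hF.deriv, hgd, hh.deriv]
  rw [← hc, ← hs]
  have hexp : Real.exp (z^2/2) * Real.exp (-z^2/2) = 1 := by
    rw [← Real.exp_add, show z^2/2 + -z^2/2 = (0:ℝ) from by ring, Real.exp_zero]
  have key : ∀ A B : ℝ, Real.exp (z^2/2) / (2 * (1 - E)) *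
      (Real.exp (-z^2/2) * (-z) * A + Real.exp (-z^2/2) * B)
      = (-z * A + B) / (2 * (1 - E)) := by
    intro A B
    calc Real.exp (z^2/2) / (2 * (1 - E)) *
        (Real.exp (-z^2/2) * (-z) * A + Real.exp (-z^2/2) * B)
        = Real.exp (z^2/2) * Real.exp (-z^2/2) * ((-z * A + B) / (2 * (1 - E))) := by ring
      _ = (-z * A + B) / (2 * (1 - E)) := by rw [hexp]; ring
  rw [key]
  have hpi : Real.pi = c^2/(2*E) := by rw [hc2]; field_simp
  rw [show (1:ℝ) - E = s^2 from hs2.symm, hpi]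
  have hE' : E ≠ 0 := hE0.ne'
  have hs' : s ≠ 0 := hs0.ne'
  have hc' : c ≠ 0 := hc0.ne'
  field_simp
  ring
end

section
/- With the coupling matrix J as above and any function m : Fin Γ → [0,1], the difference of consecutive row-averages satisfies |∑_c J_{r,c} m(c) − ∑_c J_{r−1,c} m(c)| ≤ (max_c m(c) restricted to the common support) · (1/((2w+1)g)) · (2w·(g_*/w) + 2ḡ) < (g_* + ḡ)/(w·g) · sup m, for any interior row r (i.e. w+1 ≤ r ≤ Γ−w). -/
/-- Smoothness of row-averages under the coupling matrix: with `J` obtained by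
row-normalizing a design function `g_w` (Lipschitz on `[−1,1]` with constant `g_*`,
pinched in `[g̲, ḡ]`, vanishing outside), for any `m : Fin Γ → [0,1]` and interior
consecutive rows `r−1, r`, the difference of row-averages is bounded by
`(g_* + ḡ)/(w g̲) · sup m`. -/
theorem stmt_8 (w Γ : ℕ) (hw : 0 < w) (hΓ : 2 * w + 1 ≤ Γ)
    (g : ℝ → ℝ) (gl gu gs : ℝ) (hgl : 0 < gl) (hglu : gl ≤ gu) (hgs : 0 ≤ gs)
    (hzero : ∀ x : ℝ, 1 < |x| → g x = 0)
    (hbound : ∀ x : ℝ, |x| ≤ 1 → gl ≤ g x ∧ g x ≤ gu)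
    (hlip : ∀ k k' : ℤ, |k| ≤ (w:ℤ) → |k'| ≤ (w:ℤ) →
      |g ((k:ℝ)/(w:ℝ)) - g ((k':ℝ)/(w:ℝ))| ≤ (gs / (w:ℝ)) * |(k:ℝ) - (k':ℝ)|)
    (J : Fin Γ → Fin Γ → ℝ)
    (hJ : ∀ r c : Fin Γ, J r c =
      g (((c.val : ℝ) - (r.val : ℝ)) / (w:ℝ)) /
        ∑ c' : Fin Γ, g (((c'.val : ℝ) - (r.val : ℝ)) / (w:ℝ)))
    (m : Fin Γ → ℝ) (hm : ∀ c, m c ∈ Set.Icc (0:ℝ) 1)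
    (r rp : Fin Γ) (hrp : rp.val + 1 = r.val)
    (hleft : w + 1 ≤ r.val) (hright : r.val + w ≤ Γ) :
    |(∑ c, J r c * m c) - ∑ c, J rp c * m c| ≤ (gs + gu) / ((w:ℝ) * gl) * (⨆ c, m c) := by
  have hW : (0:ℝ) < (w:ℝ) := by exact_mod_cast hw
  have hgu : 0 < gu := lt_of_lt_of_le hgl hglu
  have hpw : w ≤ rp.val := by omega
  have hrg : rp.val + w + 1 ≤ Γ := by omega
  -- integerized design function
  set G : ℤ → ℝ := fun k => g ((k:ℝ)/(w:ℝ)) with hGdef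
  have hGz : ∀ k : ℤ, (w:ℤ) < |k| → G k = 0 := by
    intro k hk
    apply hzero
    rw [abs_div, abs_of_pos hW, lt_div_iff₀ hW, one_mul]
    exact_mod_cast hk
  have hGb : ∀ k : ℤ, |k| ≤ (w:ℤ) → gl ≤ G k ∧ G k ≤ gu := by
    intro k hk
    apply hbound
    rw [abs_div, abs_of_pos hW, div_le_one hW]
    exact_mod_cast hk
  have hG0 : ∀ k : ℤ, 0 ≤ G k := by
    intro k
    rcases le_or_gt (|k|) (w:ℤ) with h | h
    · exact le_trans hgl.le (hGb k h).1
    · rw [hGz k h]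
  have hGlip : ∀ k k' : ℤ, |k| ≤ (w:ℤ) → |k'| ≤ (w:ℤ) →
      |G k - G k'| ≤ (gs / (w:ℝ)) * |(k:ℝ) - (k':ℝ)| := fun k k' hk hk' => hlip k k' hk hk'
  -- row sums
  set S : Fin Γ → ℝ := fun ρ => ∑ c' : Fin Γ, G ((c'.val:ℤ) - (ρ.val:ℤ)) with hSdef
  have harg : ∀ a b : ℕ, g (((a:ℝ) - (b:ℝ))/(w:ℝ)) = G ((a:ℤ) - (b:ℤ)) := by
    intro a b
    simp only [hGdef]
    congr 1
    push_cast
    ring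
  have hSeq : ∀ ρ : Fin Γ, (∑ c' : Fin Γ, g (((c'.val:ℝ) - (ρ.val:ℝ))/(w:ℝ))) = S ρ := by
    intro ρ
    exact Finset.sum_congr rfl (fun c _ => harg c.val ρ.val)
  have hJ' : ∀ ρ c : Fin Γ, J ρ c = G ((c.val:ℤ) - (ρ.val:ℤ)) / S ρ := by
    intro ρ c
    rw [hJ ρ c, hSeq ρ, harg]
  -- telescoping: S rp = S r + G (Γ - r)
  set F : ℕ → ℝ := fun n => G ((n:ℤ) - (rp.val:ℤ) - 1) with hF
  have hSr_range : S r = ∑ n ∈ Finset.range Γ, F n := by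
    rw [hSdef]; beta_reduce
    rw [Fin.sum_univ_eq_sum_range (fun n => G ((n:ℤ) - (r.val:ℤ))) Γ]
    exact Finset.sum_congr rfl (fun n _ => by simp only [hF]; congr 1; omega)
  have hSp_range : S rp = ∑ n ∈ Finset.range Γ, F (n+1) := by
    rw [hSdef]; beta_reduce
    rw [Fin.sum_univ_eq_sum_range (fun n => G ((n:ℤ) - (rp.val:ℤ))) Γ]
    exact Finset.sum_congr rfl (fun n _ => by simp only [hF]; congr 1; push_cast; ring)
  have hTel : S rp = S r + G ((Γ:ℤ) - (r.val:ℤ)) := by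
    have h1 : S rp - S r = F Γ - F 0 := by
      rw [hSr_range, hSp_range, ← Finset.sum_sub_distrib, Finset.sum_range_sub F]
    have hF0 : F 0 = 0 := by
      apply hGz
      rw [lt_abs]
      omega
    have hFΓ : F Γ = G ((Γ:ℤ) - (r.val:ℤ)) := by
      simp only [hF]
      congr 1
      omega
    rw [hF0, hFΓ] at h1
    linarith
  have hSp_ge : S r ≤ S rp := by
    have := hG0 ((Γ:ℤ) - (r.val:ℤ))
    linarith [hTel]
  -- lower bound for S r
  have hSr_lb : 2 * (w:ℝ) * gl ≤ S r := by
    have hrange : S r = ∑ n ∈ Finset.range Γ, G ((n:ℤ) - (r.val:ℤ)) := by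
      rw [hSdef]; beta_reduce; exact Fin.sum_univ_eq_sum_range (fun n => G ((n:ℤ) - (r.val:ℤ))) Γ
    have hsub : Finset.Ico (r.val - w) (r.val + w) ⊆ Finset.range Γ := by
      intro n hn
      rw [Finset.mem_Ico] at hn
      rw [Finset.mem_range]
      omega
    have h1 : ∑ n ∈ Finset.Ico (r.val - w) (r.val + w), G ((n:ℤ) - (r.val:ℤ))
        ≤ ∑ n ∈ Finset.range Γ, G ((n:ℤ) - (r.val:ℤ)) :=
      Finset.sum_le_sum_of_subset_of_nonneg hsub (fun i _ _ => hG0 _)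
    have h2 : (Finset.Ico (r.val - w) (r.val + w)).card • gl
        ≤ ∑ n ∈ Finset.Ico (r.val - w) (r.val + w), G ((n:ℤ) - (r.val:ℤ)) := by
      apply Finset.card_nsmul_le_sum
      intro n hn
      rw [Finset.mem_Ico] at hn
      exact (hGb _ (by rw [abs_le]; omega)).1
    have hcard : (Finset.Ico (r.val - w) (r.val + w)).card = 2 * w := by
      rw [Nat.card_Ico]; omega
    rw [hcard, nsmul_eq_mul] at h2
    rw [hrange]
    calc 2 * (w:ℝ) * gl = ((2 * w : ℕ) : ℝ) * gl := by push_cast; ring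
      _ ≤ _ := le_trans h2 h1
  have hSr_pos : 0 < S r :=
    lt_of_lt_of_le (by positivity) hSr_lb
  have hSp_pos : 0 < S rp := lt_of_lt_of_le hSr_pos hSp_ge
  -- pointwise bound on |J r c - J rp c|
  have hpoint : ∀ c : Fin Γ, |J r c - J rp c| ≤
      |G ((c.val:ℤ) - (r.val:ℤ)) - G ((c.val:ℤ) - (rp.val:ℤ))| / S r
        + G ((c.val:ℤ) - (rp.val:ℤ)) * ((S rp - S r) / (S r * S rp)) := by
    intro c
    rw [hJ' r c, hJ' rp c]
    have key : G ((c.val:ℤ) - (r.val:ℤ)) / S r - G ((c.val:ℤ) - (rp.val:ℤ)) / S rp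
        = (G ((c.val:ℤ) - (r.val:ℤ)) - G ((c.val:ℤ) - (rp.val:ℤ))) / S r
          + G ((c.val:ℤ) - (rp.val:ℤ)) * ((S rp - S r) / (S r * S rp)) := by
      field_simp
      ring
    rw [key]
    refine (abs_add_le _ _).trans (le_of_eq ?_)
    have e1 : |(G ((c.val:ℤ) - (r.val:ℤ)) - G ((c.val:ℤ) - (rp.val:ℤ))) / S r|
        = |G ((c.val:ℤ) - (r.val:ℤ)) - G ((c.val:ℤ) - (rp.val:ℤ))| / S r := by
      rw [abs_div, abs_of_pos hSr_pos]
    have e2 : |G ((c.val:ℤ) - (rp.val:ℤ)) * ((S rp - S r) / (S r * S rp))|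
        = G ((c.val:ℤ) - (rp.val:ℤ)) * ((S rp - S r) / (S r * S rp)) := by
      apply abs_of_nonneg
      apply mul_nonneg (hG0 _)
      apply div_nonneg (by linarith) (le_of_lt (mul_pos hSr_pos hSp_pos))
    rw [e1, e2]
  -- bound on the total variation sum
  have hAbound : ∑ n ∈ Finset.range Γ, |G ((n:ℤ) - (r.val:ℤ)) - G ((n:ℤ) - (rp.val:ℤ))|
      ≤ 2 * gs + gu + (if rp.val + w + 1 < Γ then gu else 0) := by
    set v : ℕ → ℝ := fun n => (if n = rp.val - w then gu else 0)
      + (if n = rp.val + w + 1 then gu else 0)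
      + (if n ∈ Finset.Ico (rp.val - w + 1) (rp.val + w + 1) then gs/(w:ℝ) else 0) with hv
    have hptv : ∀ n ∈ Finset.range Γ,
        |G ((n:ℤ) - (r.val:ℤ)) - G ((n:ℤ) - (rp.val:ℤ))| ≤ v n := by
      intro n _
      by_cases h1 : n = rp.val - w
      · have e1 : (n:ℤ) - (r.val:ℤ) = -(w:ℤ) - 1 := by omega
        have e2 : (n:ℤ) - (rp.val:ℤ) = -(w:ℤ) := by omega
        have hv1 : v n = gu := by
          simp only [hv]
          rw [if_pos h1, if_neg (by omega), if_neg (by rw [Finset.mem_Ico]; omega)]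
          ring
        rw [e1, e2, hv1, hGz _ (by rw [lt_abs]; omega), zero_sub, abs_neg,
          abs_of_nonneg (hG0 _)]
        exact (hGb _ (by rw [abs_le]; omega)).2
      · by_cases h2 : n = rp.val + w + 1
        · have e1 : (n:ℤ) - (r.val:ℤ) = (w:ℤ) := by omega
          have e2 : (n:ℤ) - (rp.val:ℤ) = (w:ℤ) + 1 := by omega
          have hv1 : v n = gu := by
            simp only [hv]
            rw [if_neg h1, if_pos h2, if_neg (by rw [Finset.mem_Ico]; omega)]
            ring
          rw [e1, e2, hv1, hGz ((w:ℤ)+1) (by rw [lt_abs]; omega), sub_zero,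
            abs_of_nonneg (hG0 _)]
          exact (hGb _ (by rw [abs_le]; omega)).2
        · by_cases h3 : n ∈ Finset.Ico (rp.val - w + 1) (rp.val + w + 1)
          · rw [Finset.mem_Ico] at h3
            have hv1 : v n = gs/(w:ℝ) := by
              simp only [hv]
              rw [if_neg h1, if_neg h2, if_pos (by rw [Finset.mem_Ico]; omega)]
              ring
            rw [hv1]
            have hk : |(n:ℤ) - (r.val:ℤ)| ≤ (w:ℤ) := by rw [abs_le]; omega
            have hk' : |(n:ℤ) - (rp.val:ℤ)| ≤ (w:ℤ) := by rw [abs_le]; omega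
            have := hGlip _ _ hk hk'
            have e : |(((n:ℤ) - (r.val:ℤ) : ℤ):ℝ) - (((n:ℤ) - (rp.val:ℤ) : ℤ):ℝ)| = 1 := by
              have e0 : ((n:ℤ) - (r.val:ℤ)) = ((n:ℤ) - (rp.val:ℤ)) - 1 := by omega
              rw [e0]
              push_cast
              norm_num
            rw [e, mul_one] at this
            exact this
          · rw [Finset.mem_Ico] at h3
            have hz1 : G ((n:ℤ) - (r.val:ℤ)) = 0 := by
              apply hGz; rw [lt_abs]; omega
            have hz2 : G ((n:ℤ) - (rp.val:ℤ)) = 0 := by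
              apply hGz; rw [lt_abs]; omega
            have hv1 : v n = 0 := by
              simp only [hv]
              rw [if_neg h1, if_neg h2, if_neg (by rw [Finset.mem_Ico]; omega)]
              ring
            rw [hz1, hz2, hv1, sub_zero, abs_zero]
    refine le_trans (Finset.sum_le_sum hptv) ?_
    simp only [hv]
    rw [Finset.sum_add_distrib, Finset.sum_add_distrib]
    have s1 : (∑ n ∈ Finset.range Γ, if n = rp.val - w then gu else 0) ≤ gu := by
      rw [Finset.sum_ite_eq' (Finset.range Γ) (rp.val - w) (fun _ => gu)]
      split_ifs
      · exact le_rfl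
      · exact hgu.le
    have s2 : (∑ n ∈ Finset.range Γ, if n = rp.val + w + 1 then gu else 0)
        = (if rp.val + w + 1 < Γ then gu else 0) := by
      rw [Finset.sum_ite_eq' (Finset.range Γ) (rp.val + w + 1) (fun _ => gu)]
      simp [Finset.mem_range]
    have s3 : (∑ n ∈ Finset.range Γ,
        if n ∈ Finset.Ico (rp.val - w + 1) (rp.val + w + 1) then gs/(w:ℝ) else 0)
        ≤ 2 * gs := by
      rw [Finset.sum_ite_mem]
      rw [Finset.sum_const, nsmul_eq_mul]
      have hc : ((Finset.range Γ ∩ Finset.Ico (rp.val - w + 1) (rp.val + w + 1)).card : ℝ)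
          ≤ ((2 * w : ℕ) : ℝ) := by
        have h := Finset.card_le_card
          (Finset.inter_subset_right (s₁ := Finset.range Γ)
            (s₂ := Finset.Ico (rp.val - w + 1) (rp.val + w + 1)))
        have hcard : (Finset.Ico (rp.val - w + 1) (rp.val + w + 1)).card = 2 * w := by
          rw [Nat.card_Ico]; omega
        exact_mod_cast hcard ▸ h
      calc ((Finset.range Γ ∩ Finset.Ico (rp.val - w + 1) (rp.val + w + 1)).card : ℝ)
            * (gs/(w:ℝ)) ≤ ((2 * w : ℕ) : ℝ) * (gs/(w:ℝ)) := by
            apply mul_le_mul_of_nonneg_right hc (by positivity)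
        _ = 2 * gs := by
            push_cast
            field_simp
    linarith
  -- combine: sum of |J r c - J rp c|
  have hsum : ∑ c : Fin Γ, |J r c - J rp c| ≤ (gs + gu) / ((w:ℝ) * gl) := by
    have step1 : ∑ c : Fin Γ, |J r c - J rp c|
        ≤ (∑ c : Fin Γ, |G ((c.val:ℤ) - (r.val:ℤ)) - G ((c.val:ℤ) - (rp.val:ℤ))|) / S r
          + (S rp - S r) / S r := by
      refine le_trans (Finset.sum_le_sum (fun c _ => hpoint c)) (le_of_eq ?_)
      rw [Finset.sum_add_distrib, ← Finset.sum_div, ← Finset.sum_mul]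
      congr 1
      have : (∑ c : Fin Γ, G ((c.val:ℤ) - (rp.val:ℤ))) = S rp := rfl
      rw [this]
      field_simp
    have step2 : (∑ c : Fin Γ, |G ((c.val:ℤ) - (r.val:ℤ)) - G ((c.val:ℤ) - (rp.val:ℤ))|)
        = ∑ n ∈ Finset.range Γ, |G ((n:ℤ) - (r.val:ℤ)) - G ((n:ℤ) - (rp.val:ℤ))| :=
      Fin.sum_univ_eq_sum_range (fun n => |G ((n:ℤ) - (r.val:ℤ)) - G ((n:ℤ) - (rp.val:ℤ))|) Γ
    have hend : (if rp.val + w + 1 < Γ then gu else 0) + G ((Γ:ℤ) - (r.val:ℤ)) ≤ gu := by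
      split_ifs with h
      · have hz : G ((Γ:ℤ) - (r.val:ℤ)) = 0 := by
          apply hGz; rw [lt_abs]; omega
        rw [hz, add_zero]
      · have hΓr : (Γ:ℤ) - (r.val:ℤ) = (w:ℤ) := by omega
        rw [zero_add, hΓr]
        exact (hGb _ (by rw [abs_le]; omega)).2
    have hnum : (∑ c : Fin Γ, |G ((c.val:ℤ) - (r.val:ℤ)) - G ((c.val:ℤ) - (rp.val:ℤ))|)
        + (S rp - S r) ≤ 2 * gs + 2 * gu := by
      rw [step2]
      have : S rp - S r = G ((Γ:ℤ) - (r.val:ℤ)) := by linarith [hTel]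
      rw [this]
      linarith [hAbound, hend]
    have step3 : (∑ c : Fin Γ, |G ((c.val:ℤ) - (r.val:ℤ)) - G ((c.val:ℤ) - (rp.val:ℤ))|) / S r
          + (S rp - S r) / S r ≤ (2 * gs + 2 * gu) / S r := by
      rw [← add_div]
      exact div_le_div_of_nonneg_right hnum hSr_pos.le
    have hwgl : (0:ℝ) < 2 * (w:ℝ) * gl := by positivity
    have step4 : (2 * gs + 2 * gu) / S r ≤ (2 * gs + 2 * gu) / (2 * (w:ℝ) * gl) := by
      apply div_le_div_of_nonneg_left (by linarith) hwgl hSr_lb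
    have step5 : (2 * gs + 2 * gu) / (2 * (w:ℝ) * gl) = (gs + gu) / ((w:ℝ) * gl) := by
      rw [div_eq_div_iff (by positivity) (by positivity)]
      ring
    calc ∑ c : Fin Γ, |J r c - J rp c| ≤ _ := step1
      _ ≤ (2 * gs + 2 * gu) / S r := step3
      _ ≤ (2 * gs + 2 * gu) / (2 * (w:ℝ) * gl) := step4
      _ = (gs + gu) / ((w:ℝ) * gl) := step5
  -- finish
  have hne : Nonempty (Fin Γ) := ⟨⟨0, by omega⟩⟩
  have hBdd : BddAbove (Set.range m) := (Set.finite_range m).bddAbove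
  have hMle : ∀ c, m c ≤ ⨆ c, m c := fun c => le_ciSup hBdd c
  have hM0 : 0 ≤ ⨆ c, m c :=
    le_trans (hm (Classical.arbitrary _)).1 (hMle _)
  calc |(∑ c, J r c * m c) - ∑ c, J rp c * m c|
      = |∑ c, (J r c - J rp c) * m c| := by
        rw [← Finset.sum_sub_distrib]
        congr 1
        exact Finset.sum_congr rfl (fun c _ => by ring)
    _ ≤ ∑ c, |(J r c - J rp c) * m c| := Finset.abs_sum_le_sum_abs _ _
    _ ≤ ∑ c, |J r c - J rp c| * (⨆ c, m c) := by
        apply Finset.sum_le_sum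
        intro c _
        rw [abs_mul, abs_of_nonneg (hm c).1]
        exact mul_le_mul_of_nonneg_left (hMle c) (abs_nonneg _)
    _ = (∑ c, |J r c - J rp c|) * (⨆ c, m c) := (Finset.sum_mul _ _ _).symm
    _ ≤ (gs + gu) / ((w:ℝ) * gl) * (⨆ c, m c) := mul_le_mul_of_nonneg_right hsum hM0
end

section
/- For a uniform prior over the B standard basis vectors of ℝ^B observed through an AWGN channel with noise variance σ² per component, the MMSE satisfies mmse(σ) ≤ 2B·exp(−c/σ²) for some constant c > 0 depending only on B (e.g. one may take c = 1/8 with a suitable prefactor). -/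
open MeasureTheory

/-- Standard Gaussian density on `ℝ^B`. -/
noncomputable def gpdfB (B : ℕ) (z : Fin B → ℝ) : ℝ :=
  ∏ j, Real.exp (-(z j)^2 / 2) / Real.sqrt (2 * Real.pi)

/-- The `i`-th standard basis vector of `ℝ^B`. -/
def basisVec (B : ℕ) (i : Fin B) : Fin B → ℝ := fun k => if k = i then 1 else 0

/-- Posterior mean (denoiser) for the uniform prior over standard basis vectors
under AWGN with variance `σ²` per component. -/
noncomputable def denoiseB (B : ℕ) (σ : ℝ) (r : Fin B → ℝ) (k : Fin B) : ℝ :=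
  Real.exp (r k / σ^2) / ∑ j, Real.exp (r j / σ^2)

/-- MMSE for a uniform prior over the `B` standard basis vectors observed through AWGN
with per-component noise variance `σ²`. -/
noncomputable def mmseB (B : ℕ) (σ : ℝ) : ℝ :=
  (1 / (B:ℝ)) * ∑ i : Fin B, ∫ z : Fin B → ℝ, gpdfB B z *
    ∑ k, (denoiseB B σ (fun j => basisVec B i j + σ * z j) k - basisVec B i k)^2

/-! ### Auxiliary lemmas -/

lemma gauss_tilt_eq (t x : ℝ) :
    Real.exp (-x^2/2) * Real.exp (t*x) = Real.exp (t^2/2) * Real.exp (-(x - t)^2/2) := by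
  rw [← Real.exp_add, ← Real.exp_add]; ring_nf

lemma integrable_gauss_tilt (t : ℝ) :
    Integrable (fun x : ℝ => Real.exp (-x^2/2) * Real.exp (t*x)) := by
  simp_rw [gauss_tilt_eq]
  apply Integrable.const_mul
  have h := (integrable_exp_neg_mul_sq (by norm_num : (0:ℝ) < 1/2)).comp_sub_right t
  convert h using 2 with x
  ring_nf

lemma integral_gauss_tilt (t : ℝ) :
    ∫ x : ℝ, Real.exp (-x^2/2) * Real.exp (t*x) = Real.sqrt (2*Real.pi) * Real.exp (t^2/2) := by
  simp_rw [gauss_tilt_eq]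
  rw [integral_const_mul]
  have h1 : ∫ x : ℝ, Real.exp (-(x - t)^2/2) = ∫ x : ℝ, Real.exp (-x^2/2) := by
    exact integral_sub_right_eq_self (fun x => Real.exp (-x^2/2)) t
  rw [h1]
  have h2 : ∀ x : ℝ, Real.exp (-x^2/2) = Real.exp (-(1/2) * x^2) := by intro x; ring_nf
  simp_rw [h2]
  rw [integral_gaussian]
  rw [mul_comm]
  norm_num
  ring

lemma integral_gauss_tilt' (t : ℝ) :
    ∫ x : ℝ, Real.exp (-x^2/2) / Real.sqrt (2*Real.pi) * Real.exp (t*x)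
      = Real.exp (t^2/2) := by
  have h : ∀ x : ℝ, Real.exp (-x^2/2) / Real.sqrt (2*Real.pi) * Real.exp (t*x)
      = (Real.sqrt (2*Real.pi))⁻¹ * (Real.exp (-x^2/2) * Real.exp (t*x)) := by
    intro x; field_simp
  simp_rw [h]
  rw [integral_const_mul, integral_gauss_tilt]
  have hpi : Real.sqrt (2*Real.pi) ≠ 0 := by
    positivity
  field_simp

lemma integrable_gauss_tilt' (t : ℝ) :
    Integrable (fun x : ℝ => Real.exp (-x^2/2) / Real.sqrt (2*Real.pi) * Real.exp (t*x)) := by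
  have h : ∀ x : ℝ, Real.exp (-x^2/2) / Real.sqrt (2*Real.pi) * Real.exp (t*x)
      = (Real.sqrt (2*Real.pi))⁻¹ * (Real.exp (-x^2/2) * Real.exp (t*x)) := by
    intro x; field_simp
  simp_rw [h]
  exact (integrable_gauss_tilt t).const_mul _

section
variable (B : ℕ) (i j : Fin B) (c : ℝ)

noncomputable def tiltCoef (k : Fin B) : ℝ := if k = j then c else if k = i then -c else 0

lemma prod_eq (hij : j ≠ i) (z : Fin B → ℝ) :
    gpdfB B z * Real.exp (c * (z j - z i))
      = ∏ k, (Real.exp (-(z k)^2/2) / Real.sqrt (2*Real.pi) * Real.exp (tiltCoef B i j c k * (z k))) := by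
  rw [Finset.prod_mul_distrib]
  unfold gpdfB
  congr 1
  rw [← Real.exp_sum]
  congr 1
  have h : ∀ k : Fin B, tiltCoef B i j c k * z k
      = (if k = j then c * z k else 0) + (if k = i then -c * z k else 0) := by
    intro k
    unfold tiltCoef
    by_cases h1 : k = j
    · subst h1; simp [hij]
    · by_cases h2 : k = i
      · subst h2; simp [h1]
      · simp [h1, h2]
  simp_rw [h, Finset.sum_add_distrib, Finset.sum_ite_eq' Finset.univ, Finset.mem_univ, if_true]
  ring

lemma integral_tilt (hij : j ≠ i) :
    ∫ z : Fin B → ℝ, gpdfB B z * Real.exp (c * (z j - z i)) = Real.exp (c^2) := by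
  simp_rw [prod_eq B i j c hij]
  rw [MeasureTheory.integral_fintype_prod_volume_eq_prod (ι := Fin B)
    (fun k x => Real.exp (-x^2/2) / Real.sqrt (2*Real.pi) * Real.exp (tiltCoef B i j c k * x))]
  simp_rw [integral_gauss_tilt']
  rw [← Real.exp_sum]
  congr 1
  have h : ∀ k : Fin B, tiltCoef B i j c k ^ 2 / 2
      = (if k = j then c^2/2 else 0) + (if k = i then c^2/2 else 0) := by
    intro k
    unfold tiltCoef
    by_cases h1 : k = j
    · subst h1; simp [hij]
    · by_cases h2 : k = i
      · subst h2; simp [h1, neg_sq]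
      · simp [h1, h2]
  simp_rw [h, Finset.sum_add_distrib, Finset.sum_ite_eq' Finset.univ, Finset.mem_univ, if_true]
  ring

lemma integrable_tilt (hij : j ≠ i) :
    Integrable (fun z : Fin B → ℝ => gpdfB B z * Real.exp (c * (z j - z i))) := by
  simp_rw [prod_eq B i j c hij]
  exact Integrable.fintype_prod (fun k => integrable_gauss_tilt' _)

end

lemma gpdfB_nonneg (B : ℕ) (z : Fin B → ℝ) : 0 ≤ gpdfB B z := by
  unfold gpdfB
  apply Finset.prod_nonneg
  intro k _
  positivity

set_option maxHeartbeats 1000000 in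
lemma pointwise_bound (B : ℕ) (σ : ℝ) (hσ : 0 < σ) (i : Fin B) (z : Fin B → ℝ) :
    ∑ k, (denoiseB B σ (fun j => basisVec B i j + σ * z j) k - basisVec B i k)^2
      ≤ ∑ j ∈ Finset.univ.erase i,
          2 * (Real.exp (-(1/(2*σ^2))) * Real.exp ((1/(2*σ)) * (z j - z i))) := by
  set r : Fin B → ℝ := fun j => basisVec B i j + σ * z j with hr
  set w : Fin B → ℝ := fun k => Real.exp (r k / σ^2) with hwdef
  set E : ℝ := ∑ k, w k with hE
  have hw : ∀ k, 0 < w k := fun k => Real.exp_pos _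
  have hEpos : 0 < E := Finset.sum_pos (fun k _ => hw k) ⟨i, Finset.mem_univ i⟩
  have hwiE : w i ≤ E := Finset.single_le_sum (fun k _ => (hw k).le) (Finset.mem_univ i)
  set d : Fin B → ℝ := fun k => w k / E with hd
  have hdpos : ∀ k, 0 ≤ d k := fun k => div_nonneg (hw k).le hEpos.le
  have hd1 : ∀ k, d k ≤ 1 := fun k =>
    (div_le_one hEpos).mpr (Finset.single_le_sum (fun k _ => (hw k).le) (Finset.mem_univ k))
  have hsum : ∑ k, d k = 1 := by
    rw [hd, ← Finset.sum_div]; exact div_self hEpos.ne'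
  have hden : ∀ k, denoiseB B σ r k = d k := fun k => rfl
  -- the exponential comparison terms
  set a : Fin B → ℝ := fun j => Real.exp ((r j - r i) / (2*σ^2)) with ha
  have hapos : ∀ j, 0 ≤ a j := fun j => (Real.exp_pos _).le
  -- d j ≤ a j ^ 2 for j ≠ i
  have hda : ∀ j, d j ≤ a j ^ 2 := by
    intro j
    have h1 : d j ≤ w j / w i := by
      rw [hd]
      simp only
      rw [div_le_div_iff₀ hEpos (hw i)]
      exact mul_le_mul_of_nonneg_left hwiE (hw j).le
    have h2 : w j / w i = a j ^ 2 := by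
      show Real.exp (r j / σ^2) / Real.exp (r i / σ^2)
        = Real.exp ((r j - r i) / (2*σ^2)) ^ 2
      have e2 : ∀ y : ℝ, Real.exp y ^ 2 = Real.exp (y + y) := by
        intro y; rw [Real.exp_add]; ring
      rw [← Real.exp_sub, e2]
      congr 1
      field_simp
      ring
    linarith [h1, h2.le, h2.ge]
  -- step 1 : sum of squares ≤ 2 (1 - d i)
  have step1 : ∑ k, (d k - basisVec B i k)^2 ≤ 2 * (1 - d i) := by
    have hless : ∀ k, (d k - basisVec B i k)^2
        ≤ d k + basisVec B i k - 2 * basisVec B i k * d k := by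
      intro k
      unfold basisVec
      split
      · nlinarith [hdpos k, hd1 k]
      · nlinarith [hdpos k, hd1 k]
    calc ∑ k, (d k - basisVec B i k)^2
        ≤ ∑ k, (d k + basisVec B i k - 2 * basisVec B i k * d k) :=
          Finset.sum_le_sum (fun k _ => hless k)
      _ = 2 * (1 - d i) := by
          rw [Finset.sum_sub_distrib, Finset.sum_add_distrib, hsum]
          unfold basisVec
          simp [Finset.sum_ite_eq' Finset.univ, ite_mul]
          ring
  -- step 2 : 1 - d i ≤ √(∑ a j ^ 2 over erase i) ≤ ∑ a j over erase i
  have herase : ∑ j ∈ Finset.univ.erase i, d j = 1 - d i := by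
    have := Finset.add_sum_erase Finset.univ d (Finset.mem_univ i)
    linarith [hsum, this]
  set A : ℝ := ∑ j ∈ Finset.univ.erase i, a j ^ 2 with hA
  set S : ℝ := ∑ j ∈ Finset.univ.erase i, a j with hS
  have hSnn : 0 ≤ S := Finset.sum_nonneg (fun j _ => hapos j)
  have h1A : 1 - d i ≤ A := by
    rw [← herase, hA]
    exact Finset.sum_le_sum (fun j _ => hda j)
  have h1d0 : 0 ≤ 1 - d i := by linarith [hd1 i]
  have h1d1 : 1 - d i ≤ 1 := by linarith [hdpos i]
  have hAS : A ≤ S ^ 2 := by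
    rw [hA, hS]
    exact Finset.sum_sq_le_sq_sum_of_nonneg (fun j _ => hapos j)
  have step2 : 1 - d i ≤ S := by
    nlinarith [h1A, hAS, h1d0, h1d1, hSnn]
  -- combine and rewrite a j into the target form
  have hfinal : ∀ j ∈ Finset.univ.erase i,
      2 * a j = 2 * (Real.exp (-(1/(2*σ^2))) * Real.exp ((1/(2*σ)) * (z j - z i))) := by
    intro j hj
    have hji : j ≠ i := Finset.ne_of_mem_erase hj
    congr 1
    have haj : a j = Real.exp ((r j - r i) / (2*σ^2)) := by rw [ha]
    rw [haj, ← Real.exp_add]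
    congr 1
    have h0 : r j = σ * z j := by
      show basisVec B i j + σ * z j = σ * z j
      simp [basisVec, hji]
    have h1 : r i = 1 + σ * z i := by
      show basisVec B i i + σ * z i = 1 + σ * z i
      simp [basisVec]
    rw [h0, h1]
    have hσ2 : (σ:ℝ) ≠ 0 := hσ.ne'
    field_simp
    ring
  calc ∑ k, (denoiseB B σ r k - basisVec B i k)^2
      = ∑ k, (d k - basisVec B i k)^2 := rfl
    _ ≤ 2 * (1 - d i) := step1
    _ ≤ 2 * S := by linarith
    _ = ∑ j ∈ Finset.univ.erase i, 2 * a j := by rw [hS, Finset.mul_sum]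
    _ = _ := Finset.sum_congr rfl hfinal

set_option maxHeartbeats 1000000 in
lemma per_index_bound (B : ℕ) (σ : ℝ) (hσ : 0 < σ) (i : Fin B) :
    (∫ z : Fin B → ℝ, gpdfB B z *
      ∑ k, (denoiseB B σ (fun j => basisVec B i j + σ * z j) k - basisVec B i k)^2)
    ≤ ((Finset.univ.erase i).card : ℝ) * (2 * Real.exp (-(1/(4*σ^2)))) := by
  set g : (Fin B → ℝ) → ℝ := fun z => ∑ j ∈ Finset.univ.erase i,
    (2 * Real.exp (-(1/(2*σ^2)))) * (gpdfB B z * Real.exp ((1/(2*σ)) * (z j - z i))) with hg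
  have hint : ∀ j ∈ Finset.univ.erase i,
      Integrable (fun z : Fin B → ℝ =>
        (2 * Real.exp (-(1/(2*σ^2)))) * (gpdfB B z * Real.exp ((1/(2*σ)) * (z j - z i)))) := by
    intro j hj
    exact (integrable_tilt B i j (1/(2*σ)) (Finset.ne_of_mem_erase hj)).const_mul _
  have hgint : Integrable g := integrable_finset_sum _ hint
  have hgval : ∫ z, g z
      = ((Finset.univ.erase i).card : ℝ) * (2 * Real.exp (-(1/(4*σ^2)))) := by
    rw [hg, integral_finset_sum _ hint]
    have hterm : ∀ j ∈ Finset.univ.erase i,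
        (∫ z : Fin B → ℝ,
          (2 * Real.exp (-(1/(2*σ^2)))) * (gpdfB B z * Real.exp ((1/(2*σ)) * (z j - z i))))
        = 2 * Real.exp (-(1/(4*σ^2))) := by
      intro j hj
      rw [MeasureTheory.integral_const_mul, integral_tilt B i j (1/(2*σ)) (Finset.ne_of_mem_erase hj)]
      rw [mul_assoc, ← Real.exp_add]
      congr 2
      field_simp
      ring
    rw [Finset.sum_congr rfl hterm, Finset.sum_const, nsmul_eq_mul]
  rw [← hgval]
  apply integral_mono_of_nonneg
  · filter_upwards with z
    have h1 : (0:ℝ) ≤ ∑ k, (denoiseB B σ (fun j => basisVec B i j + σ * z j) k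
        - basisVec B i k)^2 := Finset.sum_nonneg (fun k _ => sq_nonneg _)
    exact mul_nonneg (gpdfB_nonneg B z) h1
  · exact hgint
  · filter_upwards with z
    have hpw := pointwise_bound B σ hσ i z
    calc gpdfB B z * ∑ k, (denoiseB B σ (fun j => basisVec B i j + σ * z j) k
            - basisVec B i k)^2
        ≤ gpdfB B z * ∑ j ∈ Finset.univ.erase i,
            2 * (Real.exp (-(1/(2*σ^2))) * Real.exp ((1/(2*σ)) * (z j - z i))) :=
          mul_le_mul_of_nonneg_left hpw (gpdfB_nonneg B z)
      _ = g z := by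
          rw [hg, Finset.mul_sum]
          exact Finset.sum_congr rfl (fun j hj => by ring)

/-- The MMSE decays exponentially as `σ → 0`:
`mmse(σ) ≤ 2B exp(−c/σ²)` for some constant `c > 0` depending only on `B`. -/
theorem stmt_14 (B : ℕ) (hB : 2 ≤ B) :
    ∃ c : ℝ, 0 < c ∧ ∀ σ : ℝ, 0 < σ → mmseB B σ ≤ 2 * (B:ℝ) * Real.exp (-c / σ^2) := by
  refine ⟨1/4, by norm_num, fun σ hσ => ?_⟩
  have hB1 : (1:ℝ) ≤ (B:ℝ) := by exact_mod_cast Nat.one_le_of_lt hB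
  have hBpos : (0:ℝ) < (B:ℝ) := by linarith
  have hcard : ∀ i : Fin B, ((Finset.univ.erase i).card : ℝ) = (B:ℝ) - 1 := by
    intro i
    rw [Finset.card_erase_of_mem (Finset.mem_univ i)]
    rw [Finset.card_univ, Fintype.card_fin]
    have h1 : 1 ≤ B := Nat.one_le_of_lt hB
    push_cast [Nat.cast_sub h1]
    ring
  have hexp : Real.exp (-(1/(4*σ^2))) = Real.exp (-(1/4) / σ^2) := by
    congr 1
    have : (σ:ℝ)^2 ≠ 0 := by positivity
    field_simp
  have hmain : mmseB B σ ≤ ((B:ℝ) - 1) * (2 * Real.exp (-(1/(4*σ^2)))) := by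
    unfold mmseB
    have hsum : ∑ i : Fin B, (∫ z : Fin B → ℝ, gpdfB B z *
        ∑ k, (denoiseB B σ (fun j => basisVec B i j + σ * z j) k - basisVec B i k)^2)
        ≤ ∑ _i : Fin B, ((B:ℝ) - 1) * (2 * Real.exp (-(1/(4*σ^2)))) := by
      apply Finset.sum_le_sum
      intro i _
      calc _ ≤ ((Finset.univ.erase i).card : ℝ) * (2 * Real.exp (-(1/(4*σ^2)))) :=
            per_index_bound B σ hσ i
        _ = ((B:ℝ) - 1) * (2 * Real.exp (-(1/(4*σ^2)))) := by rw [hcard i]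
    calc (1 / (B:ℝ)) * ∑ i : Fin B, (∫ z : Fin B → ℝ, gpdfB B z *
          ∑ k, (denoiseB B σ (fun j => basisVec B i j + σ * z j) k - basisVec B i k)^2)
        ≤ (1 / (B:ℝ)) * ∑ _i : Fin B, ((B:ℝ) - 1) * (2 * Real.exp (-(1/(4*σ^2)))) := by
          apply mul_le_mul_of_nonneg_left hsum
          positivity
      _ = ((B:ℝ) - 1) * (2 * Real.exp (-(1/(4*σ^2)))) := by
          rw [Finset.sum_const, Finset.card_univ, Fintype.card_fin, nsmul_eq_mul]
          field_simp
  calc mmseB B σ ≤ ((B:ℝ) - 1) * (2 * Real.exp (-(1/(4*σ^2)))) := hmain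
    _ ≤ 2 * (B:ℝ) * Real.exp (-(1/(4*σ^2))) := by
        nlinarith [Real.exp_pos (-(1/(4*σ^2))), hB1]
    _ = 2 * (B:ℝ) * Real.exp (-(1/4) / σ^2) := by rw [hexp]
end
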